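/- For all λ, μ > 0, t ≥ 0, k ∈ ℤ and real z > 0, the series Σ_{j∈ℤ} z^{2j+1}·p_{2k,2j+1}(t;λ,μ) converges absolutely and equals e^{−(λ+μ)t}·(z^{2k}/h(z))·λ(z²+1)·sinh(t·h(z)/z). -/

import Mathlib

open scoped BigOperators

/-- Inner binomial sum `∑_{k=0}^{n-m} C(n,k) C(n,k+m) ρ^{-2k-m}`. -/
noncomputable def innerSum (ρ : ℝ) (m n : ℕ) : ℝ :=
  ∑ k ∈ Finset.range (n - m + 1),
    (n.choose k : ℝ) * (n.choose (k + m) : ℝ) * ρ ^ (-(2 * (k : ℤ) + (m : ℤ)))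

/-- Series `∑_{n≥m} [x^{2n}/(2n)! + c·x^{2n+1}/(2n+1)!]·innerSum ρ m n`. -/
noncomputable def evenSeries (x c ρ : ℝ) (m : ℕ) : ℝ :=
  ∑' j : ℕ,
    ((x ^ (2 * (m + j)) / (2 * (m + j)).factorial) +
      c * (x ^ (2 * (m + j) + 1) / (2 * (m + j) + 1).factorial)) * innerSum ρ m (m + j)

/-- Series `∑_{n≥m} x^{2n+1}/(2n+1)!·innerSum ρ m n`. -/
noncomputable def oddSeries (x ρ : ℝ) (m : ℕ) : ℝ :=
  ∑' j : ℕ,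
    (x ^ (2 * (m + j) + 1) / (2 * (m + j) + 1).factorial) * innerSum ρ m (m + j)

/-- `p_{2l,2r}(t;λ,μ)`. -/
noncomputable def pEE (lam mu t : ℝ) (l r : ℤ) : ℝ :=
  Real.exp (-(lam + mu) * t) *
    evenSeries (lam * t) ((mu - lam) / lam) (lam / mu) (r - l).natAbs

/-- `p_{2l,2r+1}(t;λ,μ)`. -/
noncomputable def pEO (lam mu t : ℝ) (l r : ℤ) : ℝ :=
  Real.exp (-(lam + mu) * t) *
    (oddSeries (lam * t) (lam / mu) (r - l).natAbs +
      oddSeries (lam * t) (lam / mu) (r - l + 1).natAbs)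

/-- `p_{2l+1,2r}(t;λ,μ)`. -/
noncomputable def pOE (lam mu t : ℝ) (l r : ℤ) : ℝ :=
  Real.exp (-(lam + mu) * t) *
    (oddSeries (mu * t) (mu / lam) (r - l - 1).natAbs +
      oddSeries (mu * t) (mu / lam) (r - l).natAbs)

/-- `p_{2l+1,2r+1}(t;λ,μ)`. -/
noncomputable def pOO (lam mu t : ℝ) (l r : ℤ) : ℝ :=
  Real.exp (-(lam + mu) * t) *
    evenSeries (mu * t) ((lam - mu) / mu) (mu / lam) (r - l).natAbs

/-- Transition probability `p_{k,n}(t;λ,μ)`, by parity of the states. -/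
noncomputable def transP (lam mu t : ℝ) (k n : ℤ) : ℝ :=
  if k % 2 = 0 then
    if n % 2 = 0 then pEE lam mu t (k / 2) (n / 2)
    else pEO lam mu t (k / 2) ((n - 1) / 2)
  else
    if n % 2 = 0 then pOE lam mu t ((k - 1) / 2) (n / 2)
    else pOO lam mu t ((k - 1) / 2) ((n - 1) / 2)

/-- `h(z) = √((μz²+λ)(λz²+μ))`. -/
noncomputable def hFun (lam mu z : ℝ) : ℝ := Real.sqrt ((mu * z ^ 2 + lam) * (lam * z ^ 2 + mu))


section Helpers

lemma two_mul_add_one_inj : Function.Injective (fun n : ℕ => 2 * n + 1) := by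
  intro a b h; simpa using h

lemma real_exp_tsum (y : ℝ) : Real.exp y = ∑' n : ℕ, y ^ n / n.factorial := by
  rw [Real.exp_eq_exp_ℝ, NormedSpace.exp_eq_tsum_div]

lemma summable_odd (y : ℝ) : Summable (fun n : ℕ => y ^ (2 * n + 1) / (2 * n + 1).factorial) :=
  (Real.summable_pow_div_factorial y).comp_injective two_mul_add_one_inj

lemma sinh_tsum (y : ℝ) : ∑' n : ℕ, y ^ (2 * n + 1) / (2 * n + 1).factorial = Real.sinh y := by
  have hs1 := Real.summable_pow_div_factorial y
  have hs2 := Real.summable_pow_div_factorial (-y)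
  have h : Real.sinh y = ∑' n : ℕ, (y ^ n / n.factorial - (-y) ^ n / n.factorial) / 2 := by
    rw [Real.sinh_eq, real_exp_tsum, real_exp_tsum, ← hs1.tsum_sub hs2, tsum_div_const]
  rw [h]
  have key := Function.Injective.tsum_eq (g := fun n : ℕ => 2 * n + 1)
    two_mul_add_one_inj
    (f := fun n : ℕ => (y ^ n / n.factorial - (-y) ^ n / n.factorial) / 2) ?_
  · rw [← key]
    refine (tsum_congr fun n => ?_).symm
    have hodd : (-y) ^ (2 * n + 1) = -(y ^ (2 * n + 1)) := Odd.neg_pow ⟨n, by ring⟩ y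
    simp only [hodd]; ring
  · intro x hx
    rcases Nat.even_or_odd x with h | ⟨c, hc⟩
    · have : (-y) ^ x = y ^ x := h.neg_pow y
      simp [Function.mem_support, this] at hx
    · exact ⟨c, by simp; omega⟩

lemma innerSum_eq (ρ : ℝ) (m n : ℕ) :
    innerSum ρ m n = ∑ k ∈ Finset.range (n - m + 1),
      (n.choose k : ℝ) * (n.choose (k + m) : ℝ) * (ρ⁻¹) ^ (2 * k + m) := by
  refine Finset.sum_congr rfl fun k _ => ?_
  have : (-(2 * (k : ℤ) + (m : ℤ))) = -((2 * k + m : ℕ) : ℤ) := by push_cast; ring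
  rw [this, zpow_neg, zpow_natCast, inv_pow]

lemma innerSum_nonneg {ρ : ℝ} (hρ : 0 < ρ) (m n : ℕ) : 0 ≤ innerSum ρ m n := by
  rw [innerSum_eq]
  exact Finset.sum_nonneg fun k _ => by positivity

lemma innerSum_le {ρ : ℝ} (hρ : 0 < ρ) {m n : ℕ} (hmn : m ≤ n) :
    innerSum ρ m n ≤ ((1 + ρ⁻¹) ^ n) ^ 2 := by
  have hinv : (0:ℝ) ≤ ρ⁻¹ := by positivity
  rw [innerSum_eq]
  have hexp : ((1 + ρ⁻¹) ^ n) ^ 2 =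
      ∑ p ∈ Finset.range (n+1) ×ˢ Finset.range (n+1),
        (n.choose p.1 : ℝ) * (n.choose p.2 : ℝ) * (ρ⁻¹) ^ (p.1 + p.2) := by
    rw [Finset.sum_product]
    have hbin : (1 + ρ⁻¹) ^ n = ∑ i ∈ Finset.range (n+1), (n.choose i : ℝ) * (ρ⁻¹) ^ i := by
      rw [add_comm (1:ℝ), add_pow]
      refine Finset.sum_congr rfl fun i _ => by ring
    rw [sq, hbin, Finset.sum_mul_sum]
    refine Finset.sum_congr rfl fun i _ => Finset.sum_congr rfl fun j _ => by
      rw [pow_add]; ring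
  rw [hexp]
  have := Finset.sum_le_sum_of_subset_of_nonneg
    (s := Finset.image (fun k => (k, k + m)) (Finset.range (n - m + 1)))
    (t := Finset.range (n+1) ×ˢ Finset.range (n+1))
    (f := fun p : ℕ × ℕ => (n.choose p.1 : ℝ) * (n.choose p.2 : ℝ) * (ρ⁻¹) ^ (p.1 + p.2))
    ?_ (fun p _ _ => by positivity)
  · refine le_trans (le_of_eq ?_) this
    rw [Finset.sum_image (fun a _ b _ h => by simpa using (Prod.mk.injEq _ _ _ _ ▸ h).1)]
    refine Finset.sum_congr rfl fun k hk => ?_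
    have : 2 * k + m = k + (k + m) := by omega
    rw [this]
  · intro p hp
    simp only [Finset.mem_image, Finset.mem_range] at hp
    obtain ⟨k, hk, rfl⟩ := hp
    simp only [Finset.mem_product, Finset.mem_range]
    omega

lemma binom_key {ρ z : ℝ} (hρ : 0 < ρ) (hz : 0 < z) (n : ℕ) :
    ∑ m ∈ Finset.Icc (-(n:ℤ)) (n:ℤ), z ^ (2*m) * innerSum ρ m.natAbs n
      = ((1 + z^2/ρ) * (1 + 1/(z^2*ρ))) ^ n := by
  have hz' : z ≠ 0 := ne_of_gt hz
  have hρ' : ρ ≠ 0 := ne_of_gt hρ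
  set u : ℝ := z^2/ρ with hu
  set v : ℝ := 1/(z^2*ρ) with hv
  have hrhs : ((1+u)*(1+v))^n = ∑ p ∈ Finset.range (n+1) ×ˢ Finset.range (n+1),
      (n.choose p.1 : ℝ) * (n.choose p.2 : ℝ) * (u ^ p.1 * v ^ p.2) := by
    rw [mul_pow, add_comm (1:ℝ) u, add_comm (1:ℝ) v, add_pow, add_pow,
      Finset.sum_mul_sum, Finset.sum_product]
    exact Finset.sum_congr rfl fun i _ => Finset.sum_congr rfl fun j _ => by ring
  rw [hrhs]
  simp_rw [innerSum_eq, Finset.mul_sum]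
  rw [Finset.sum_sigma']
  refine Finset.sum_nbij' (fun x => (x.2 + x.1.toNat, x.2 + (-x.1).toNat))
    (fun p => ⟨(p.1 : ℤ) - (p.2 : ℤ), min p.1 p.2⟩) ?_ ?_ ?_ ?_ ?_
  · rintro ⟨m, k⟩ hx
    simp only [Finset.mem_sigma, Finset.mem_Icc, Finset.mem_range] at hx
    simp only [Finset.mem_product, Finset.mem_range]
    omega
  · rintro ⟨i, j⟩ hp
    simp only [Finset.mem_product, Finset.mem_range] at hp
    simp only [Finset.mem_sigma, Finset.mem_Icc, Finset.mem_range]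
    omega
  · rintro ⟨m, k⟩ hx
    simp only [Finset.mem_sigma, Finset.mem_Icc, Finset.mem_range] at hx
    dsimp only
    have e1 : ((k + m.toNat : ℕ) : ℤ) - ((k + (-m).toNat : ℕ) : ℤ) = m := by omega
    have e2 : (k + m.toNat) ⊓ (k + (-m).toNat) = k := by omega
    rw [e1, e2]
  · rintro ⟨i, j⟩ hp
    simp only [Finset.mem_product, Finset.mem_range] at hp
    dsimp only
    simp only [Prod.mk.injEq]
    omega
  · rintro ⟨m, k⟩ hx
    simp only [Finset.mem_sigma, Finset.mem_Icc, Finset.mem_range] at hx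
    dsimp only
    simp only [hu, hv]
    rcases le_or_gt 0 m with hm | hm
    · have h1 : m.natAbs = m.toNat := by omega
      have h2 : (-m).toNat = 0 := by omega
      have h3 : z ^ (2*m) = z ^ (2 * m.toNat) := by
        rw [← zpow_natCast]; congr 1; omega
      rw [h1, h2, h3]
      simp only [div_pow, one_div, mul_pow, inv_pow, ← pow_mul]
      field_simp
      ring
    · have h1 : m.natAbs = (-m).toNat := by omega
      have h2 : m.toNat = 0 := by omega
      have h3 : z ^ (2*m) = (z ^ (2 * (-m).toNat))⁻¹ := by
        rw [← zpow_natCast, ← zpow_neg]; congr 1; omega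
      rw [h1, h2, h3]
      simp only [add_zero, div_pow, one_div, mul_pow, inv_pow, ← pow_mul]
      field_simp
      ring

lemma summable_ite {x ρ : ℝ} (hx : 0 ≤ x) (hρ : 0 < ρ) (M : ℕ) :
    Summable (fun n : ℕ => if M ≤ n then
      x ^ (2 * n + 1) / (2 * n + 1).factorial * innerSum ρ M n else 0) := by
  have h1 : (1:ℝ) ≤ 1 + ρ⁻¹ := by
    have : (0:ℝ) < ρ⁻¹ := by positivity
    linarith
  refine Summable.of_nonneg_of_le (fun n => ?_) (fun n => ?_)
    ((summable_odd (x * (1 + ρ⁻¹))))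
  · split
    · have := innerSum_nonneg hρ M n; positivity
    · exact le_refl 0
  · split <;> rename_i h
    · calc x ^ (2 * n + 1) / (2 * n + 1).factorial * innerSum ρ M n
          ≤ x ^ (2 * n + 1) / (2 * n + 1).factorial * ((1 + ρ⁻¹) ^ n) ^ 2 := by
            refine mul_le_mul_of_nonneg_left (innerSum_le hρ h) (by positivity)
        _ ≤ x ^ (2 * n + 1) / (2 * n + 1).factorial * (1 + ρ⁻¹) ^ (2 * n + 1) := by
            refine mul_le_mul_of_nonneg_left ?_ (by positivity)
            calc ((1 + ρ⁻¹) ^ n) ^ 2 = (1 + ρ⁻¹) ^ (2 * n) := by rw [← pow_mul, mul_comm]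
              _ ≤ (1 + ρ⁻¹) ^ (2 * n + 1) := pow_le_pow_right₀ h1 (by omega)
        _ = (x * (1 + ρ⁻¹)) ^ (2 * n + 1) / (2 * n + 1).factorial := by
            rw [mul_pow]; ring
    · positivity

lemma oddSeries_ite {x ρ : ℝ} (M : ℕ) :
    oddSeries x ρ M = ∑' n : ℕ, (if M ≤ n then
      x ^ (2 * n + 1) / (2 * n + 1).factorial * innerSum ρ M n else 0) := by
  rw [oddSeries]
  have key := Function.Injective.tsum_eq (g := fun j : ℕ => M + j)
    (add_right_injective M)
    (f := fun n : ℕ => if M ≤ n then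
      x ^ (2 * n + 1) / (2 * n + 1).factorial * innerSum ρ M n else 0) ?_
  · rw [← key]
    exact tsum_congr fun j => by rw [if_pos (Nat.le_add_right M j)]
  · intro n hn
    simp only [Function.mem_support, ne_eq] at hn
    rcases le_or_gt M n with h | h
    · exact ⟨n - M, by simp; omega⟩
    · exact absurd (if_neg (by omega)) hn

lemma oddSeries_nonneg {x ρ : ℝ} (hx : 0 ≤ x) (hρ : 0 < ρ) (M : ℕ) :
    0 ≤ oddSeries x ρ M := by
  rw [oddSeries_ite]
  refine tsum_nonneg fun n => ?_
  split
  · have := innerSum_nonneg hρ M n; positivity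
  · exact le_refl 0

noncomputable def Fa (x ρ z : ℝ) (n : ℕ) (m : ℤ) : ℝ :=
  z ^ (2*m+1) *
    ((if m.natAbs ≤ n then x ^ (2*n+1) / (2*n+1).factorial * innerSum ρ m.natAbs n else 0)
      + (if (m+1).natAbs ≤ n then x ^ (2*n+1) / (2*n+1).factorial * innerSum ρ (m+1).natAbs n else 0))

lemma Fa_nonneg {x ρ z : ℝ} (hx : 0 ≤ x) (hρ : 0 < ρ) (hz : 0 < z) (n : ℕ) (m : ℤ) :
    0 ≤ Fa x ρ z n m := by
  unfold Fa
  have h1 : (0:ℝ) ≤ z ^ (2*m+1) := zpow_nonneg hz.le _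
  refine mul_nonneg h1 (add_nonneg ?_ ?_)
  · rcases le_or_gt m.natAbs n with h | h
    · rw [if_pos h]
      have h2 := innerSum_nonneg hρ m.natAbs n
      positivity
    · rw [if_neg (by omega)]
  · rcases le_or_gt (m+1).natAbs n with h | h
    · rw [if_pos h]
      have h2 := innerSum_nonneg hρ (m+1).natAbs n
      positivity
    · rw [if_neg (by omega)]

lemma Fa_support {x ρ z : ℝ} (n : ℕ) :
    ∀ m ∉ Finset.Icc (-(n:ℤ)-1) (n:ℤ), Fa x ρ z n m = 0 := by
  intro m hm
  simp only [Finset.mem_Icc, not_and_or, not_le] at hm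
  unfold Fa
  rw [if_neg (by omega), if_neg (by omega)]
  simp

lemma Fa_row_tsum {x ρ z : ℝ} (hρ : 0 < ρ) (hz : 0 < z) (n : ℕ) :
    ∑' m : ℤ, Fa x ρ z n m =
      (z + z⁻¹) * (x ^ (2*n+1) / (2*n+1).factorial *
        ((1 + z^2/ρ) * (1 + 1/(z^2*ρ))) ^ n) := by
  have hz' : z ≠ 0 := ne_of_gt hz
  set c : ℝ := x ^ (2*n+1) / (2*n+1).factorial with hc
  rw [tsum_eq_sum (Fa_support n)]
  unfold Fa
  rw [Finset.sum_congr rfl (fun m _ => mul_add (z ^ (2*m+1)) _ _), Finset.sum_add_distrib]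
  have hsum1 : ∑ m ∈ Finset.Icc (-(n:ℤ)-1) (n:ℤ),
      z ^ (2*m+1) * (if m.natAbs ≤ n then c * innerSum ρ m.natAbs n else 0)
      = z * c * ((1 + z^2/ρ) * (1 + 1/(z^2*ρ))) ^ n := by
    rw [← Finset.sum_subset (Finset.Icc_subset_Icc (by omega) le_rfl :
        Finset.Icc (-(n:ℤ)) (n:ℤ) ⊆ Finset.Icc (-(n:ℤ)-1) (n:ℤ))
        (fun m hm hm' => by
          simp only [Finset.mem_Icc] at hm hm'
          rw [if_neg (by omega), mul_zero])]
    rw [← binom_key hρ hz n, Finset.mul_sum]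
    refine Finset.sum_congr rfl fun m hm => ?_
    simp only [Finset.mem_Icc] at hm
    rw [if_pos (by omega), zpow_add_one₀ hz']
    ring
  have hsum2 : ∑ m ∈ Finset.Icc (-(n:ℤ)-1) (n:ℤ),
      z ^ (2*m+1) * (if (m+1).natAbs ≤ n then c * innerSum ρ (m+1).natAbs n else 0)
      = z⁻¹ * c * ((1 + z^2/ρ) * (1 + 1/(z^2*ρ))) ^ n := by
    rw [← Finset.sum_subset (Finset.Icc_subset_Icc le_rfl (by omega) :
        Finset.Icc (-(n:ℤ)-1) ((n:ℤ)-1) ⊆ Finset.Icc (-(n:ℤ)-1) (n:ℤ))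
        (fun m hm hm' => by
          simp only [Finset.mem_Icc] at hm hm'
          rw [if_neg (by omega), mul_zero])]
    rw [← binom_key hρ hz n, Finset.mul_sum]
    refine Finset.sum_nbij' (fun m => m + 1) (fun m => m - 1) ?_ ?_ ?_ ?_ ?_
    · intro m hm; simp only [Finset.mem_Icc] at hm ⊢; omega
    · intro m hm; simp only [Finset.mem_Icc] at hm ⊢; omega
    · intro m _; simp
    · intro m _; simp
    · intro m hm
      simp only [Finset.mem_Icc] at hm
      rw [if_pos (by omega)]
      have hzz : z ^ (2*(m+1)) = z ^ (2*m+1) * z := by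
        rw [← zpow_add_one₀ hz']; congr 1; ring
      rw [hzz]
      field_simp
  rw [hsum1, hsum2]
  ring

end Helpers

/-- Even–odd generating function: `∑_{j∈ℤ} z^{2j+1} p_{2k,2j+1}(t)` converges absolutely and
equals `e^{-(λ+μ)t}·(z^{2k}/h(z))·λ(z²+1)sinh(t h(z)/z)`. -/
theorem even_odd_generating_function (lam mu : ℝ) (hlam : 0 < lam) (hmu : 0 < mu)
    (t : ℝ) (ht : 0 ≤ t) (k : ℤ) (z : ℝ) (hz : 0 < z) :
    Summable (fun j : ℤ => |z ^ (2 * j + 1) * transP lam mu t (2 * k) (2 * j + 1)|) ∧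
    ∑' j : ℤ, z ^ (2 * j + 1) * transP lam mu t (2 * k) (2 * j + 1) =
      Real.exp (-(lam + mu) * t) * (z ^ (2 * k) / hFun lam mu z) *
        (lam * (z ^ 2 + 1) * Real.sinh (t * hFun lam mu z / z)) := by

  have hz' : z ≠ 0 := ne_of_gt hz
  have hlam' : lam ≠ 0 := ne_of_gt hlam
  have hmu' : mu ≠ 0 := ne_of_gt hmu
  set E : ℝ := Real.exp (-(lam + mu) * t) with hE
  have hEpos : 0 < E := Real.exp_pos _
  set x : ℝ := lam * t with hxdef
  have hx : 0 ≤ x := mul_nonneg hlam.le ht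
  set ρ : ℝ := lam / mu with hρdef
  have hρ : 0 < ρ := div_pos hlam hmu
  set A : ℝ := (1 + z^2/ρ) * (1 + 1/(z^2*ρ)) with hAdef
  have hA : 0 < A := by positivity
  set s : ℝ := Real.sqrt A with hsdef
  have hs : 0 < s := Real.sqrt_pos.2 hA
  have hs' : s ≠ 0 := ne_of_gt hs
  have hs2 : s ^ 2 = A := Real.sq_sqrt hA.le
  -- column summability and values
  have hcolS : ∀ m : ℤ, Summable (fun n => Fa x ρ z n m) := by
    intro m
    have h := ((summable_ite hx hρ m.natAbs).add (summable_ite hx hρ (m+1).natAbs)).mul_left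
      (z ^ (2*m+1))
    exact h.congr fun n => by simp only [Fa]
  have hcolT : ∀ m : ℤ, ∑' n : ℕ, Fa x ρ z n m
      = z ^ (2*m+1) * (oddSeries x ρ m.natAbs + oddSeries x ρ (m+1).natAbs) := by
    intro m
    rw [oddSeries_ite (x := x) (ρ := ρ) m.natAbs, oddSeries_ite (x := x) (ρ := ρ) (m+1).natAbs,
      ← Summable.tsum_add (summable_ite hx hρ m.natAbs) (summable_ite hx hρ (m+1).natAbs),
      ← tsum_mul_left]
    exact tsum_congr fun n => by simp only [Fa]
  -- row summability and values
  have hrowS : ∀ n : ℕ, Summable (fun m => Fa x ρ z n m) := fun n =>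
    summable_of_ne_finset_zero (Fa_support n)
  have hrowT : ∀ n : ℕ, ∑' m : ℤ, Fa x ρ z n m
      = (z + z⁻¹) * (x ^ (2*n+1) / (2*n+1).factorial * A ^ n) := fun n =>
    Fa_row_tsum hρ hz n
  have h1 : ∀ n : ℕ, x ^ (2*n+1) / (2*n+1).factorial * A ^ n
      = (x*s) ^ (2*n+1) / (2*n+1).factorial / s := by
    intro n
    have hAs : A ^ n = s ^ (2*n) := by rw [← hs2, ← pow_mul, mul_comm]
    rw [hAs, mul_pow]
    field_simp
    ring
  have hrs : Summable (fun n : ℕ => ∑' m : ℤ, Fa x ρ z n m) := by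
    have hb : Summable (fun n : ℕ => (z + z⁻¹) * ((x*s) ^ (2*n+1) / (2*n+1).factorial / s)) :=
      ((summable_odd (x*s)).div_const s).mul_left _
    refine (hb.congr fun n => by rw [← h1 n]).congr fun n => (hrowT n).symm
  have hprod : Summable (fun p : ℕ × ℤ => Fa x ρ z p.1 p.2) := by
    refine (summable_prod_of_nonneg ?_).2 ⟨fun n => hrowS n, hrs⟩
    intro p; exact Fa_nonneg hx hρ hz p.1 p.2
  have hswap : Summable (fun p : ℤ × ℕ => Fa x ρ z p.2 p.1) := hprod.prod_symm
  have hWsum : Summable (fun m : ℤ => ∑' n : ℕ, Fa x ρ z n m) := by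
    refine ((summable_prod_of_nonneg ?_).1 hswap).2
    intro p; exact Fa_nonneg hx hρ hz p.2 p.1
  have hcomm : ∑' (m : ℤ) (n : ℕ), Fa x ρ z n m = ∑' (n : ℕ) (m : ℤ), Fa x ρ z n m :=
    Summable.tsum_comm' hprod hrowS hcolS
  have hval : ∑' (n : ℕ) (m : ℤ), Fa x ρ z n m = (z + z⁻¹) * (Real.sinh (x*s) / s) := by
    rw [tsum_congr hrowT, tsum_congr (fun n => by rw [h1 n]), tsum_mul_left,
      tsum_div_const, sinh_tsum]
  -- the weight function
  set W : ℤ → ℝ := fun m => z ^ (2*m+1) *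
    (oddSeries x ρ m.natAbs + oddSeries x ρ (m+1).natAbs) with hWdef
  have hW2 : Summable W := hWsum.congr fun m => hcolT m
  have hWt : ∑' m : ℤ, W m = (z + z⁻¹) * (Real.sinh (x*s) / s) := by
    rw [tsum_congr (fun m => (hcolT m).symm)]
    exact hcomm.trans hval
  have hWnn : ∀ m : ℤ, 0 ≤ W m := by
    intro m
    have o1 := oddSeries_nonneg hx hρ m.natAbs
    have o2 := oddSeries_nonneg hx hρ (m+1).natAbs
    have hzp : (0:ℝ) ≤ z ^ (2*m+1) := zpow_nonneg hz.le _
    exact mul_nonneg hzp (add_nonneg o1 o2)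
  -- identify the target terms
  have hTP : ∀ j : ℤ, z ^ (2*j+1) * transP lam mu t (2*k) (2*j+1)
      = (E * z ^ (2*k)) * W (j - k) := by
    intro j
    have h2k : (2*k) % 2 = 0 := by omega
    have hodd : ¬ ((2*j+1) % 2 = 0) := by omega
    have e1 : (2*k)/2 = k := by omega
    have e2 : (2*j+1-1)/2 = j := by omega
    simp only [transP, if_pos h2k, if_neg hodd, e1, e2, pEO]
    have hzz : (z:ℝ) ^ (2*k) * z ^ (2*(j-k)+1) = z ^ (2*j+1) := by
      rw [← zpow_add₀ hz']; congr 1; ring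
    simp only [hWdef]
    have e3 : j - k + 1 = (j - k) + 1 := rfl
    rw [← hzz, ← hxdef, ← hρdef, ← hE]
    ring
  have hTsummable : Summable (fun j : ℤ => z ^ (2*j+1) * transP lam mu t (2*k) (2*j+1)) := by
    refine Summable.congr ?_ (fun j => (hTP j).symm)
    have hcomp : Summable (fun j : ℤ => W (j - k)) :=
      hW2.comp_injective (Equiv.subRight k).injective
    exact hcomp.mul_left _
  constructor
  · refine hTsummable.abs.congr fun j => ?_
    rfl
  · have hEq1 : ∑' j : ℤ, z ^ (2*j+1) * transP lam mu t (2*k) (2*j+1)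
        = (E * z ^ (2*k)) * ∑' m : ℤ, W m := by
      rw [tsum_congr hTP, tsum_mul_left]
      congr 1
      have := (Equiv.subRight k).tsum_eq W
      simpa using this
    rw [hEq1, hWt]
    -- final algebraic identification
    have hP : (0:ℝ) < (mu*z^2+lam)*(lam*z^2+mu) := by positivity
    have hh : 0 < hFun lam mu z := Real.sqrt_pos.2 hP
    have hh' : hFun lam mu z ≠ 0 := ne_of_gt hh
    have hsA : A = ((mu*z^2+lam)*(lam*z^2+mu)) / (lam*z)^2 := by
      rw [hAdef, hρdef]
      field_simp
      ring
    have hsval : s = hFun lam mu z / (lam*z) := by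
      rw [hsdef, hsA, Real.sqrt_div hP.le, hFun]
      congr 1
      rw [Real.sqrt_sq (by positivity)]
    have hxs : x * s = t * hFun lam mu z / z := by
      rw [hsval, hxdef]
      field_simp
    rw [hxs, hsval]
    field_simp
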